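/- Let g, P > 0, let n ≥ 1 be a natural number, and let x ∈ ℝⁿ satisfy Σ_{i=1}^{n} x_i² = n·P (a power-shell codeword). Let Z = (Z₁,…,Zₙ) be i.i.d. standard Gaussian random variables and set Y_i := √g·x_i + Z_i. Then Var[ Σ_{i=1}^{n} ln( φ₁(Y_i − √g·x_i) / φ_{√(1+gP)}(Y_i) ) ] = n·( g·P·(g·P + 2) ) / ( 2·(1 + g·P)² ), i.e., it equals n·V(gP) where V is the shell dispersion, independently of the particular shell codeword x. -/

import Mathlib

open MeasureTheory ProbabilityTheory

/-- Density of the centered Gaussian with standard deviation `σ`. -/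
noncomputable def gaussDensity (σ y : ℝ) : ℝ :=
  (1 / (σ * Real.sqrt (2 * Real.pi))) * Real.exp (-(y ^ 2) / (2 * σ ^ 2))

open Real NNReal ENNReal

section Aux

lemma shell_pdf_eq (x : ℝ) : gaussianPDFReal 0 1 x
    = (Real.sqrt (2 * Real.pi))⁻¹ * Real.exp (-(2⁻¹:ℝ) * x ^ 2) := by
  simp only [gaussianPDFReal, NNReal.coe_one, mul_one, sub_zero]
  ring_nf

lemma shell_gauss_eq_withDensity : gaussianReal 0 1
    = volume.withDensity (fun x => ((gaussianPDFReal 0 1 x).toNNReal : ℝ≥0∞)) := by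
  rw [gaussianReal_of_var_ne_zero 0 one_ne_zero]
  rfl

lemma shell_integral_gauss (f : ℝ → ℝ) :
    ∫ t, f t ∂(gaussianReal 0 1) = ∫ t, gaussianPDFReal 0 1 t * f t := by
  rw [shell_gauss_eq_withDensity, integral_withDensity_eq_integral_smul
    (measurable_gaussianPDFReal 0 1).real_toNNReal]
  congr 1
  ext t
  simp [NNReal.smul_def, Real.coe_toNNReal _ (gaussianPDFReal_nonneg 0 1 t)]

lemma shell_integrable_gauss_iff (f : ℝ → ℝ) :
    Integrable f (gaussianReal 0 1) ↔ Integrable (fun t => gaussianPDFReal 0 1 t * f t) := by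
  rw [shell_gauss_eq_withDensity, integrable_withDensity_iff_integrable_smul
    (measurable_gaussianPDFReal 0 1).real_toNNReal]
  have h : (fun t => ((gaussianPDFReal 0 1 t).toNNReal : ℝ≥0) • f t)
      = fun t => gaussianPDFReal 0 1 t * f t := by
    ext t
    simp [NNReal.smul_def, Real.coe_toNNReal _ (gaussianPDFReal_nonneg 0 1 t)]
  rw [h]

lemma shell_integrable_pow_gauss (k : ℕ) :
    Integrable fun x : ℝ => x ^ k * Real.exp (-(2⁻¹:ℝ) * x ^ 2) := by
  have h := integrable_rpow_mul_exp_neg_mul_sq (b := 2⁻¹) (by norm_num)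
    (s := (k : ℝ)) (lt_of_lt_of_le neg_one_lt_zero (Nat.cast_nonneg k))
  simpa [Real.rpow_natCast] using h

lemma shell_integral_odd_pow_gauss {k : ℕ} (hk : Odd k) :
    ∫ x : ℝ, x ^ k * Real.exp (-(2⁻¹:ℝ) * x ^ 2) = 0 := by
  set f : ℝ → ℝ := fun x => x ^ k * Real.exp (-(2⁻¹:ℝ) * x ^ 2) with hf
  have hmap : Measure.map (fun x : ℝ => -x) volume = volume :=
    Measure.map_neg_eq_self volume
  have h1 : ∫ x, f x = ∫ x, f (-x) := by
    conv_lhs => rw [← hmap]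
    exact (Homeomorph.neg ℝ).measurableEmbedding.integral_map f
  have h2 : ∀ x : ℝ, f (-x) = - f x := by
    intro x
    simp [hf, hk.neg_pow, neg_mul]
  have h3 : ∫ x, f x = - ∫ x, f x := by
    conv_lhs => rw [h1]
    simp_rw [h2]
    exact integral_neg f
  linarith

lemma shell_gamma_three_half : Real.Gamma (3/2) = Real.sqrt π / 2 := by
  rw [show (3/2:ℝ) = 1/2 + 1 by norm_num, Real.Gamma_add_one (by norm_num),
    Real.Gamma_one_half_eq]
  ring

lemma shell_gamma_five_half : Real.Gamma (5/2) = 3 * Real.sqrt π / 4 := by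
  rw [show (5/2:ℝ) = 3/2 + 1 by norm_num, Real.Gamma_add_one (by norm_num),
    shell_gamma_three_half]
  ring

lemma shell_rpow_three_half : (2:ℝ) ^ ((3:ℝ)/2) = 2 * Real.sqrt 2 := by
  rw [show (3:ℝ)/2 = 1 + 1/2 by norm_num, Real.rpow_add (by norm_num), Real.rpow_one,
    ← Real.sqrt_eq_rpow]

lemma shell_rpow_five_half : (2:ℝ) ^ ((5:ℝ)/2) = 4 * Real.sqrt 2 := by
  rw [show (5:ℝ)/2 = 2 + 1/2 by norm_num, Real.rpow_add (by norm_num),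
    ← Real.sqrt_eq_rpow, show (2:ℝ) ^ (2:ℝ) = 4 by
      rw [show (2:ℝ) = ((2:ℕ):ℝ) by norm_num, Real.rpow_natCast]; norm_num]

lemma shell_integral_even_pow_gauss (k : ℕ) :
    ∫ x : ℝ, x ^ (2 * k) * Real.exp (-(2⁻¹:ℝ) * x ^ 2)
      = (2:ℝ) ^ (((2 * k : ℕ) + 1 : ℝ)/2) * Real.Gamma (((2 * k : ℕ) + 1 : ℝ)/2) := by
  have h0 : ∫ x : ℝ, x ^ (2 * k) * Real.exp (-(2⁻¹:ℝ) * x ^ 2)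
      = ∫ x : ℝ, |x| ^ (2 * k) * Real.exp (-(2⁻¹:ℝ) * |x| ^ 2) := by
    congr 1
    ext x
    rw [sq_abs, pow_mul, pow_mul, sq_abs]
  rw [h0, integral_comp_abs (f := fun y : ℝ => y ^ (2 * k) * Real.exp (-(2⁻¹:ℝ) * y ^ 2))]
  have hrw : ∀ x : ℝ, x ∈ Set.Ioi (0:ℝ) →
      x ^ (2 * k) * Real.exp (-(2⁻¹:ℝ) * x ^ 2)
        = x ^ ((2 * k : ℕ) : ℝ) * Real.exp (-(2⁻¹:ℝ) * x ^ ((2:ℕ) : ℝ)) := by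
    intro x _
    rw [Real.rpow_natCast, Real.rpow_natCast]
  rw [setIntegral_congr_fun measurableSet_Ioi hrw]
  rw [show ((2:ℕ):ℝ) = (2:ℝ) by norm_num]
  rw [integral_rpow_mul_exp_neg_mul_rpow (by norm_num)
    (lt_of_lt_of_le neg_one_lt_zero (Nat.cast_nonneg _)) (by norm_num : (0:ℝ) < 2⁻¹)]
  rw [show ((2⁻¹:ℝ) ^ (-(((2 * k : ℕ):ℝ) + 1) / 2)) = (2:ℝ) ^ ((((2 * k : ℕ):ℝ) + 1) / 2) by
    rw [Real.inv_rpow (by norm_num), ← Real.rpow_neg (by norm_num)]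
    ring_nf]
  ring

lemma shell_sqrt_two_pi : Real.sqrt (2 * π) = Real.sqrt 2 * Real.sqrt π :=
  Real.sqrt_mul (by norm_num) _

lemma shell_J0 : ∫ x : ℝ, Real.exp (-(2⁻¹:ℝ) * x ^ 2) = Real.sqrt (2 * π) := by
  rw [integral_gaussian]
  congr 1
  rw [div_eq_mul_inv, inv_inv, mul_comm]

lemma shell_J2 : ∫ x : ℝ, x ^ 2 * Real.exp (-(2⁻¹:ℝ) * x ^ 2) = Real.sqrt (2 * π) := by
  have h := shell_integral_even_pow_gauss 1
  rw [show (2*1 : ℕ) = 2 from rfl] at h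
  rw [show (((2:ℕ):ℝ) + 1)/2 = (3:ℝ)/2 by norm_num] at h
  rw [h, shell_rpow_three_half, shell_gamma_three_half, shell_sqrt_two_pi]
  ring

lemma shell_J4 : ∫ x : ℝ, x ^ 4 * Real.exp (-(2⁻¹:ℝ) * x ^ 2) = 3 * Real.sqrt (2 * π) := by
  have h := shell_integral_even_pow_gauss 2
  rw [show (2*2 : ℕ) = 4 from rfl] at h
  rw [show (((4:ℕ):ℝ) + 1)/2 = (5:ℝ)/2 by norm_num] at h
  rw [h, shell_rpow_five_half, shell_gamma_five_half, shell_sqrt_two_pi]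
  ring

lemma shell_integrable_P4 (c0 c1 c2 c3 c4 : ℝ) :
    Integrable (fun t : ℝ => c0 + c1*t + c2*t^2 + c3*t^3 + c4*t^4) (gaussianReal 0 1) := by
  rw [shell_integrable_gauss_iff]
  have h : (fun t : ℝ => gaussianPDFReal 0 1 t * (c0 + c1*t + c2*t^2 + c3*t^3 + c4*t^4))
      = fun t : ℝ =>
        (c0 * (Real.sqrt (2 * π))⁻¹) * (t ^ 0 * Real.exp (-(2⁻¹:ℝ) * t ^ 2))
        + (c1 * (Real.sqrt (2 * π))⁻¹) * (t ^ 1 * Real.exp (-(2⁻¹:ℝ) * t ^ 2))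
        + (c2 * (Real.sqrt (2 * π))⁻¹) * (t ^ 2 * Real.exp (-(2⁻¹:ℝ) * t ^ 2))
        + (c3 * (Real.sqrt (2 * π))⁻¹) * (t ^ 3 * Real.exp (-(2⁻¹:ℝ) * t ^ 2))
        + (c4 * (Real.sqrt (2 * π))⁻¹) * (t ^ 4 * Real.exp (-(2⁻¹:ℝ) * t ^ 2)) := by
    ext t
    rw [shell_pdf_eq]
    ring
  rw [h]
  exact (((((shell_integrable_pow_gauss 0).const_mul _).add
    ((shell_integrable_pow_gauss 1).const_mul _)).add
    ((shell_integrable_pow_gauss 2).const_mul _)).add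
    ((shell_integrable_pow_gauss 3).const_mul _)).add
    ((shell_integrable_pow_gauss 4).const_mul _)

lemma shell_integral_P4 (c0 c1 c2 c3 c4 : ℝ) :
    ∫ t, (c0 + c1*t + c2*t^2 + c3*t^3 + c4*t^4) ∂(gaussianReal 0 1)
      = c0 + c2 + 3*c4 := by
  rw [shell_integral_gauss]
  have h : (fun t : ℝ => gaussianPDFReal 0 1 t * (c0 + c1*t + c2*t^2 + c3*t^3 + c4*t^4))
      = fun t : ℝ =>
        (c0 * (Real.sqrt (2 * π))⁻¹) * (t ^ 0 * Real.exp (-(2⁻¹:ℝ) * t ^ 2))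
        + (c1 * (Real.sqrt (2 * π))⁻¹) * (t ^ 1 * Real.exp (-(2⁻¹:ℝ) * t ^ 2))
        + (c2 * (Real.sqrt (2 * π))⁻¹) * (t ^ 2 * Real.exp (-(2⁻¹:ℝ) * t ^ 2))
        + (c3 * (Real.sqrt (2 * π))⁻¹) * (t ^ 3 * Real.exp (-(2⁻¹:ℝ) * t ^ 2))
        + (c4 * (Real.sqrt (2 * π))⁻¹) * (t ^ 4 * Real.exp (-(2⁻¹:ℝ) * t ^ 2)) := by
    ext t
    rw [shell_pdf_eq]
    ring
  rw [h]
  have hI : ∀ (c : ℝ) (k : ℕ),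
      Integrable (fun x : ℝ => c * (x ^ k * Real.exp (-(2⁻¹:ℝ) * x ^ 2))) := fun c k =>
    (shell_integrable_pow_gauss k).const_mul c
  set E : ℝ → ℝ := fun t => Real.exp (-(2⁻¹:ℝ) * t ^ 2) with hE
  have T : ∀ k : ℕ, ∀ c : ℝ, Integrable (fun t : ℝ => c * (t ^ k * E t)) := fun k c => hI c k
  have h01 : Integrable (fun t : ℝ =>
      c0 * (√(2*π))⁻¹ * (t ^ 0 * E t) + c1 * (√(2*π))⁻¹ * (t ^ 1 * E t)) :=
    (T 0 _).add (T 1 _)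
  have h012 : Integrable (fun t : ℝ =>
      c0 * (√(2*π))⁻¹ * (t ^ 0 * E t) + c1 * (√(2*π))⁻¹ * (t ^ 1 * E t)
      + c2 * (√(2*π))⁻¹ * (t ^ 2 * E t)) := h01.add (T 2 _)
  have h0123 : Integrable (fun t : ℝ =>
      c0 * (√(2*π))⁻¹ * (t ^ 0 * E t) + c1 * (√(2*π))⁻¹ * (t ^ 1 * E t)
      + c2 * (√(2*π))⁻¹ * (t ^ 2 * E t) + c3 * (√(2*π))⁻¹ * (t ^ 3 * E t)) :=
    h012.add (T 3 _)
  rw [integral_add h0123 (T 4 _), integral_add h012 (T 3 _), integral_add h01 (T 2 _),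
    integral_add (T 0 _) (T 1 _)]
  simp only [integral_const_mul]
  have h0 : ∫ x : ℝ, x ^ 0 * Real.exp (-(2⁻¹:ℝ) * x ^ 2) = Real.sqrt (2*π) := by
    simp only [pow_zero, one_mul]
    exact shell_J0
  have h1 : ∫ x : ℝ, x ^ 1 * Real.exp (-(2⁻¹:ℝ) * x ^ 2) = 0 :=
    shell_integral_odd_pow_gauss (by decide)
  have h3 : ∫ x : ℝ, x ^ 3 * Real.exp (-(2⁻¹:ℝ) * x ^ 2) = 0 :=
    shell_integral_odd_pow_gauss (by decide)
  rw [h0, h1, h3, shell_J2, shell_J4]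
  have hπ : Real.sqrt (2*π) ≠ 0 :=
    ne_of_gt (Real.sqrt_pos.mpr (by positivity))
  field_simp
  ring

lemma shell_map_eval_pi {n : ℕ} (μ : Fin n → Measure ℝ) [∀ i, IsProbabilityMeasure (μ i)]
    (i : Fin n) :
    Measure.map (fun z : Fin n → ℝ => z i) (Measure.pi μ) = μ i := by
  ext s hs
  rw [Measure.map_apply (measurable_pi_apply i) hs]
  have hp : (fun z : Fin n → ℝ => z i) ⁻¹' s
      = Set.pi Set.univ (Function.update (fun _ : Fin n => Set.univ) i s) :=
    Set.eval_preimage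
  rw [hp, Measure.pi_pi]
  rw [Finset.prod_eq_single i
    (fun j _ hj => by rw [Function.update_of_ne hj]; exact measure_univ)
    (fun hi => absurd (Finset.mem_univ i) hi)]
  rw [Function.update_self]

lemma shell_iIndep_eval {n : ℕ} (μ : Fin n → Measure ℝ) [∀ i, IsProbabilityMeasure (μ i)] :
    iIndepFun (fun (i : Fin n) (z : Fin n → ℝ) => z i)
      (Measure.pi μ) := by
  rw [iIndepFun_iff_measure_inter_preimage_eq_mul]
  intro S sets hsets
  classical
  have h1 : (⋂ i ∈ S, (fun z : Fin n → ℝ => z i) ⁻¹' sets i)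
      = Set.pi Set.univ (fun j => if j ∈ S then sets j else Set.univ) := by
    ext z
    simp only [Set.mem_iInter, Set.mem_preimage, Set.mem_pi, Set.mem_univ, true_implies]
    refine forall_congr' fun j => ?_
    split_ifs with h <;> simp [h]
  rw [h1, Measure.pi_pi]
  have h2 : ∀ j : Fin n, μ j (if j ∈ S then sets j else Set.univ)
      = if j ∈ S then μ j (sets j) else 1 := by
    intro j
    split_ifs <;> simp
  simp_rw [h2]
  rw [Finset.prod_ite_mem Finset.univ S (fun j => μ j (sets j)), Finset.univ_inter]
  refine Finset.prod_congr rfl fun j hj => ?_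
  rw [← shell_map_eval_pi μ j, Measure.map_apply (measurable_pi_apply j) (hsets j hj)]

lemma shell_memLp_coord {n : ℕ} (i : Fin n) (a b c : ℝ) :
    MemLp (fun z : Fin n → ℝ => a + b * z i + c * z i ^ 2) 2
      (Measure.pi fun _ : Fin n => gaussianReal 0 1) := by
  set γ := gaussianReal 0 1 with hγ
  set Q : ℝ → ℝ := fun t => a + b * t + c * t ^ 2 with hQ
  have hQ2c : Continuous fun t : ℝ => Q t ^ 2 := by fun_prop
  have hmap := shell_map_eval_pi (fun _ : Fin n => γ) i
  have hXm : AEMeasurable (fun z : Fin n → ℝ => z i)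
      (Measure.pi fun _ : Fin n => γ) := (measurable_pi_apply i).aemeasurable
  have hQsq : (fun t : ℝ => Q t ^ 2)
      = fun t : ℝ => a^2 + (2*a*b)*t + (b^2 + 2*a*c)*t^2 + (2*b*c)*t^3 + c^2*t^4 := by
    ext t
    simp only [hQ]
    ring
  have hint2γ : Integrable (fun t : ℝ => Q t ^ 2) γ := by
    rw [hQsq]
    exact shell_integrable_P4 _ _ _ _ _
  have hint2 : Integrable (fun z : Fin n → ℝ => Q (z i) ^ 2)
      (Measure.pi fun _ : Fin n => γ) :=
    (integrable_map_measure hQ2c.aestronglyMeasurable hXm).mp (by rwa [hmap])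
  have hXsm : Measurable fun z : Fin n → ℝ => Q (z i) := by fun_prop
  exact (memLp_two_iff_integrable_sq hXsm.aestronglyMeasurable).mpr hint2

lemma shell_var_coord {n : ℕ} (i : Fin n) (a b c : ℝ) :
    variance (fun z : Fin n → ℝ => a + b * z i + c * z i ^ 2)
      (Measure.pi fun _ : Fin n => gaussianReal 0 1) = b ^ 2 + 2 * c ^ 2 := by
  set γ := gaussianReal 0 1 with hγ
  set Q : ℝ → ℝ := fun t => a + b * t + c * t ^ 2 with hQ
  have hQc : Continuous Q := by fun_prop
  have hQ2c : Continuous fun t : ℝ => Q t ^ 2 := by fun_prop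
  have hmap := shell_map_eval_pi (fun _ : Fin n => γ) i
  have hXm : AEMeasurable (fun z : Fin n → ℝ => z i)
      (Measure.pi fun _ : Fin n => γ) := (measurable_pi_apply i).aemeasurable
  have hQsq : (fun t : ℝ => Q t ^ 2)
      = fun t : ℝ => a^2 + (2*a*b)*t + (b^2 + 2*a*c)*t^2 + (2*b*c)*t^3 + c^2*t^4 := by
    ext t
    simp only [hQ]
    ring
  have hmem := shell_memLp_coord i a b c
  have h1 : ∫ z, Q (z i) ∂(Measure.pi fun _ : Fin n => γ) = ∫ t, Q t ∂γ := by
    conv_rhs => rw [← hmap]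
    rw [integral_map hXm hQc.aestronglyMeasurable]
  have h2 : ∫ z, Q (z i) ^ 2 ∂(Measure.pi fun _ : Fin n => γ)
      = ∫ t, Q t ^ 2 ∂γ := by
    conv_rhs => rw [← hmap]
    rw [integral_map hXm hQ2c.aestronglyMeasurable]
  have hv := variance_eq_sub hmem
  have hEQ : ∫ t, Q t ∂γ = a + c := by
    have h := shell_integral_P4 a b c 0 0
    have hfun : (fun t : ℝ => a + b*t + c*t^2 + 0*t^3 + 0*t^4) = Q := by
      ext t
      simp only [hQ]
      ring
    rw [hfun] at h
    rw [h]
    ring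
  have hEQ2 : ∫ t, Q t ^ 2 ∂γ = a^2 + b^2 + 2*a*c + 3*c^2 := by
    rw [hQsq, shell_integral_P4]
    ring
  calc variance (fun z : Fin n → ℝ => a + b * z i + c * z i ^ 2)
        (Measure.pi fun _ : Fin n => γ)
      = variance (fun z : Fin n → ℝ => Q (z i)) (Measure.pi fun _ : Fin n => γ) := rfl
    _ = (∫ z, Q (z i) ^ 2 ∂(Measure.pi fun _ : Fin n => γ))
        - (∫ z, Q (z i) ∂(Measure.pi fun _ : Fin n => γ)) ^ 2 := hv
    _ = (a^2 + b^2 + 2*a*c + 3*c^2) - (a + c)^2 := by rw [h1, h2, hEQ, hEQ2]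
    _ = b ^ 2 + 2 * c ^ 2 := by ring

lemma shell_log_term (g P : ℝ) (hg : 0 < g) (hP : 0 < P) (xi t : ℝ) :
    Real.log (gaussDensity 1 ((Real.sqrt g * xi + t) - Real.sqrt g * xi) /
      gaussDensity (Real.sqrt (1 + g * P)) (Real.sqrt g * xi + t))
    = (Real.log (Real.sqrt (1 + g * P)) + g * xi ^ 2 / (2 * (1 + g * P)))
      + (Real.sqrt g * xi / (1 + g * P)) * t
      + (1 / (2 * (1 + g * P)) - 1 / 2) * t ^ 2 := by
  have hs : 0 < 1 + g * P := by positivity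
  have hσ : 0 < Real.sqrt (1 + g * P) := Real.sqrt_pos.mpr hs
  have h2π : 0 < Real.sqrt (2 * Real.pi) := Real.sqrt_pos.mpr (by positivity)
  have hsq : Real.sqrt (1 + g * P) ^ 2 = 1 + g * P := Real.sq_sqrt hs.le
  have hgq : Real.sqrt g ^ 2 = g := Real.sq_sqrt hg.le
  rw [add_sub_cancel_left]
  unfold gaussDensity
  rw [Real.log_div (by positivity) (ne_of_gt (by positivity))]
  rw [Real.log_mul (by positivity) (Real.exp_ne_zero _),
    Real.log_mul (by positivity) (Real.exp_ne_zero _),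
    Real.log_exp, Real.log_exp, one_div, one_div, Real.log_inv, Real.log_inv,
    one_mul, Real.log_mul hσ.ne' h2π.ne', hsq, one_pow]
  have hexp : (Real.sqrt g * xi + t) ^ 2 = g * xi ^ 2 + 2 * Real.sqrt g * xi * t + t ^ 2 := by
    have h : (Real.sqrt g * xi + t) ^ 2
        = Real.sqrt g ^ 2 * xi ^ 2 + 2 * Real.sqrt g * xi * t + t ^ 2 := by ring
    rw [h, hgq]
  rw [hexp]
  field_simp
  ring

end Aux

/-- For a power-shell codeword `x` (with `Σ xᵢ² = nP`), the variance of the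
modified information density of the memoryless Gaussian channel equals
`n·V(gP)`, where `V(x) := x(x+2)/(2(1+x)²)` is the shell dispersion,
independently of the particular codeword. -/
theorem variance_shell_info_density (g P : ℝ) (hg : 0 < g) (hP : 0 < P)
    (n : ℕ) (hn : 1 ≤ n) (x : Fin n → ℝ) (hx : ∑ i, x i ^ 2 = n * P) :
    variance
      (fun z : Fin n → ℝ =>
        ∑ i : Fin n,
          Real.log
            (gaussDensity 1 ((Real.sqrt g * x i + z i) - Real.sqrt g * x i) /
              gaussDensity (Real.sqrt (1 + g * P)) (Real.sqrt g * x i + z i)))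
      (Measure.pi fun _ : Fin n => gaussianReal 0 1) =
      (n : ℝ) * (g * P * (g * P + 2)) / (2 * (1 + g * P) ^ 2) := by
  have hs : 0 < 1 + g * P := by positivity
  have hgq : Real.sqrt g ^ 2 = g := Real.sq_sqrt hg.le
  set c : ℝ := 1 / (2 * (1 + g * P)) - 1 / 2 with hc
  set A : Fin n → ℝ :=
    fun i => Real.log (Real.sqrt (1 + g * P)) + g * x i ^ 2 / (2 * (1 + g * P)) with hA
  set B : Fin n → ℝ := fun i => Real.sqrt g * x i / (1 + g * P) with hB
  set X : Fin n → (Fin n → ℝ) → ℝ := fun i z => A i + B i * z i + c * z i ^ 2 with hX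
  have hfun : (fun z : Fin n → ℝ =>
      ∑ i : Fin n,
        Real.log
          (gaussDensity 1 ((Real.sqrt g * x i + z i) - Real.sqrt g * x i) /
            gaussDensity (Real.sqrt (1 + g * P)) (Real.sqrt g * x i + z i)))
      = ∑ i : Fin n, X i := by
    ext z
    rw [Finset.sum_apply]
    exact Finset.sum_congr rfl fun i _ => shell_log_term g P hg hP (x i) (z i)
  rw [hfun]
  have hind := shell_iIndep_eval (fun _ : Fin n => gaussianReal 0 1)
  have hcomp := hind.comp (fun i t => A i + B i * t + c * t ^ 2)
    (fun i => by fun_prop)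
  have hpair : Set.Pairwise ↑(Finset.univ : Finset (Fin n))
      fun i j => IndepFun (X i) (X j) (Measure.pi fun _ : Fin n => gaussianReal 0 1) :=
    fun i _ j _ hij => hcomp.indepFun hij
  rw [IndepFun.variance_sum (fun i _ => shell_memLp_coord i (A i) (B i) c) hpair]
  have hvar : ∀ i : Fin n,
      variance (X i) (Measure.pi fun _ : Fin n => gaussianReal 0 1)
        = B i ^ 2 + 2 * c ^ 2 := fun i => shell_var_coord i (A i) (B i) c
  rw [Finset.sum_congr rfl fun i _ => hvar i]
  have hBsq : ∀ i : Fin n, B i ^ 2 = g * x i ^ 2 / (1 + g * P) ^ 2 := by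
    intro i
    rw [hB]
    rw [div_pow, mul_pow, hgq]
  rw [Finset.sum_add_distrib, Finset.sum_const, Finset.card_univ, Fintype.card_fin,
    nsmul_eq_mul, Finset.sum_congr rfl fun i _ => hBsq i]
  rw [← Finset.sum_div, ← Finset.mul_sum, hx]
  rw [hc]
  field_simp
  ring
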